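/- Let A, B be accretive n×n complex matrices and t ∈ [0,1], with R = max{t, 1−t}. Then, in the Loewner order, ℜ((1−t)A + tB) ≤ ℜ(A !_t B) + 2R·( ℜ((A+B)/2) − (ℜA) ! (ℜB) ), where A !_t B = ((1−t)A^{-1} + tB^{-1})^{-1} and X ! Y = ((X^{-1}+Y^{-1})/2)^{-1}. -/

import Mathlib

open Matrix ComplexOrder

/-- The real part `ℜA = (A + A^*)/2` of a square complex matrix. -/
noncomputable def reMat {n : ℕ} (A : Matrix (Fin n) (Fin n) ℂ) : Matrix (Fin n) (Fin n) ℂ :=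
  (1 / 2 : ℝ) • (A + Aᴴ)

/-- The weighted harmonic mean `A !_t B = ((1-t)A⁻¹ + tB⁻¹)⁻¹`. -/
noncomputable def harmMean {n : ℕ} (A B : Matrix (Fin n) (Fin n) ℂ) (t : ℝ) :
    Matrix (Fin n) (Fin n) ℂ :=
  ((1 - t) • A⁻¹ + t • B⁻¹)⁻¹

variable {n : ℕ}

lemma rsmul (r : ℝ) (M : Matrix (Fin n) (Fin n) ℂ) : r • M = (r : ℂ) • M := by
  ext i j; simp [Matrix.smul_apply, Complex.real_smul]

lemma reMat_def' (A : Matrix (Fin n) (Fin n) ℂ) :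
    reMat A = ((1/2 : ℝ) : ℂ) • (A + Aᴴ) := by rw [reMat, rsmul]

lemma reMat_herm (A : Matrix (Fin n) (Fin n) ℂ) : (reMat A).IsHermitian := by
  rw [reMat_def']
  unfold Matrix.IsHermitian
  rw [conjTranspose_smul, conjTranspose_add, conjTranspose_conjTranspose]
  simp [add_comm]

lemma reMat_add (A B : Matrix (Fin n) (Fin n) ℂ) : reMat (A + B) = reMat A + reMat B := by
  simp only [reMat, conjTranspose_add]
  rw [← smul_add]; congr 1; abel

lemma reMat_rsmul (r : ℝ) (A : Matrix (Fin n) (Fin n) ℂ) : reMat (r • A) = r • reMat A := by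
  simp only [reMat, rsmul, conjTranspose_smul, Complex.star_def, Complex.conj_ofReal]
  rw [← smul_add, smul_comm]

-- star (M *ᵥ w) ⬝ᵥ z = star w ⬝ᵥ (Mᴴ *ᵥ z)
lemma h1 (M : Matrix (Fin n) (Fin n) ℂ) (w z : Fin n → ℂ) :
    star (M *ᵥ w) ⬝ᵥ z = star w ⬝ᵥ (Mᴴ *ᵥ z) := by
  rw [star_mulVec, ← Matrix.dotProduct_mulVec]

-- star of quadratic-ish form
lemma h2 (M : Matrix (Fin n) (Fin n) ℂ) (w z : Fin n → ℂ) :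
    star (star w ⬝ᵥ (M *ᵥ z)) = star z ⬝ᵥ (Mᴴ *ᵥ w) := by
  rw [star_dotProduct, star_star, ← h1]

lemma h2re (M : Matrix (Fin n) (Fin n) ℂ) (w z : Fin n → ℂ) :
    (star w ⬝ᵥ (M *ᵥ z)).re = (star z ⬝ᵥ (Mᴴ *ᵥ w)).re := by
  rw [← h2]; exact (Complex.conj_re _).symm

lemma dot_reMat (M : Matrix (Fin n) (Fin n) ℂ) (x : Fin n → ℂ) :
    star x ⬝ᵥ (reMat M *ᵥ x) = (((star x ⬝ᵥ (M *ᵥ x)).re : ℝ) : ℂ) := by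
  rw [reMat_def', smul_mulVec, dotProduct_smul, add_mulVec, dotProduct_add]
  rw [← h2 M x x]
  simp only [Complex.star_def]
  rw [Complex.add_conj, smul_eq_mul]
  push_cast
  ring
lemma herm_dot_real {M : Matrix (Fin n) (Fin n) ℂ} (hM : M.IsHermitian) (x : Fin n → ℂ) :
    star x ⬝ᵥ (M *ᵥ x) = (((star x ⬝ᵥ (M *ᵥ x)).re : ℝ) : ℂ) := by
  have h := h2 M x x
  rw [hM.eq] at h
  exact ((Complex.conj_eq_iff_re).mp h).symm

-- accretive implies invertible
lemma acc_isUnit {A : Matrix (Fin n) (Fin n) ℂ} (hA : (reMat A).PosDef) : IsUnit A := by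
  rw [Matrix.isUnit_iff_isUnit_det, isUnit_iff_ne_zero]
  intro hdet
  obtain ⟨v, hv, hAv⟩ := Matrix.exists_mulVec_eq_zero_iff.mpr hdet
  have h := hA.re_dotProduct_pos hv
  rw [dot_reMat] at h
  simp only [RCLike.re_to_complex, Complex.ofReal_re] at h
  rw [hAv] at h
  simp at h

lemma acc_det (hA : (reMat A).PosDef) : IsUnit A.det := by
  rw [← Matrix.isUnit_iff_isUnit_det]; exact acc_isUnit hA

lemma acc_reInv {A : Matrix (Fin n) (Fin n) ℂ} (hA : (reMat A).PosDef) : (reMat A⁻¹).PosDef := by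
  refine .of_dotProduct_mulVec_pos (reMat_herm _) fun x hx => ?_
  have hxu : A *ᵥ (A⁻¹ *ᵥ x) = x := by
    rw [mulVec_mulVec, Matrix.mul_nonsing_inv _ (acc_det hA), one_mulVec]
  set u := A⁻¹ *ᵥ x with hu
  have hune : u ≠ 0 := by
    intro h; apply hx; rw [← hxu, h, mulVec_zero]
  have key : (star x ⬝ᵥ (A⁻¹ *ᵥ x)).re = (star u ⬝ᵥ (A *ᵥ u)).re := by
    conv_lhs => rw [← hu, ← hxu]
    rw [h1]
    exact (h2re A u u).symm
  rw [dot_reMat, key]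
  have := hA.re_dotProduct_pos hune
  rw [dot_reMat] at this
  simp only [RCLike.re_to_complex, Complex.ofReal_re] at this
  exact_mod_cast this

lemma convex_posDef {P Q : Matrix (Fin n) (Fin n) ℂ} (hP : P.PosDef) (hQ : Q.PosDef)
    {a b : ℝ} (ha : 0 ≤ a) (hb : 0 ≤ b) (hab : a + b = 1) :
    ((a : ℂ) • P + (b : ℂ) • Q).PosDef := by
  have hherm : ((a : ℂ) • P + (b : ℂ) • Q).IsHermitian := by
    rw [Matrix.IsHermitian, conjTranspose_add, conjTranspose_smul, conjTranspose_smul,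
      hP.isHermitian.eq, hQ.isHermitian.eq, Complex.star_def, Complex.conj_ofReal,
      Complex.conj_ofReal]
  refine .of_dotProduct_mulVec_pos hherm fun x hx => ?_
  have hexp : star x ⬝ᵥ (((a : ℂ) • P + (b : ℂ) • Q) *ᵥ x)
      = (a : ℂ) * (star x ⬝ᵥ (P *ᵥ x)) + (b : ℂ) * (star x ⬝ᵥ (Q *ᵥ x)) := by
    rw [add_mulVec, smul_mulVec, smul_mulVec, dotProduct_add,
      dotProduct_smul, dotProduct_smul, smul_eq_mul, smul_eq_mul]
  rw [hexp, herm_dot_real hP.isHermitian, herm_dot_real hQ.isHermitian]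
  have hrP : 0 < (star x ⬝ᵥ (P *ᵥ x)).re := by
    have := hP.re_dotProduct_pos hx; simpa using this
  have hrQ : 0 < (star x ⬝ᵥ (Q *ᵥ x)).re := by
    have := hQ.re_dotProduct_pos hx; simpa using this
  have : (a:ℂ) * ((star x ⬝ᵥ (P *ᵥ x)).re : ℂ) + (b:ℂ) * ((star x ⬝ᵥ (Q *ᵥ x)).re : ℂ)
      = ((a * (star x ⬝ᵥ (P *ᵥ x)).re + b * (star x ⬝ᵥ (Q *ᵥ x)).re : ℝ) : ℂ) := by
    push_cast; ring
  rw [this]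
  rw [Complex.zero_lt_real]
  rcases eq_or_lt_of_le ha with h | h
  · nlinarith
  · nlinarith [mul_nonneg hb hrQ.le]

lemma inv_q {A : Matrix (Fin n) (Fin n) ℂ} (hdet : IsUnit A.det) (y : Fin n → ℂ) :
    (star y ⬝ᵥ (A⁻¹ *ᵥ y)).re = (star (A⁻¹ *ᵥ y) ⬝ᵥ (A *ᵥ (A⁻¹ *ᵥ y))).re := by
  set u := A⁻¹ *ᵥ y with hu
  have hxu : A *ᵥ u = y := by
    rw [hu, mulVec_mulVec, Matrix.mul_nonsing_inv _ hdet, one_mulVec]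
  conv_lhs => rw [← hxu]
  rw [h1]
  exact (h2re A u u).symm

lemma L1W {H K : Matrix (Fin n) (Fin n) ℂ} (hH : H.PosDef) (hK : K.PosDef)
    {a b : ℝ} (ha : 0 ≤ a) (hb : 0 ≤ b) (hab : a + b = 1) (u v : Fin n → ℂ) :
    (star ((a:ℂ) • u + (b:ℂ) • v) ⬝ᵥ
        ((((a:ℂ) • H⁻¹ + (b:ℂ) • K⁻¹)⁻¹) *ᵥ ((a:ℂ) • u + (b:ℂ) • v))).re ≤
      a * (star u ⬝ᵥ (H *ᵥ u)).re + b * (star v ⬝ᵥ (K *ᵥ v)).re := by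
  set M := (a:ℂ) • H⁻¹ + (b:ℂ) • K⁻¹ with hM
  have hMpd : M.PosDef := convex_posDef hH.inv hK.inv ha hb hab
  have hMdet : IsUnit M.det := ((Matrix.isUnit_iff_isUnit_det M).mp hMpd.isUnit)
  set x := (a:ℂ) • u + (b:ℂ) • v with hx
  set z := M⁻¹ *ᵥ x with hz
  have hxz : M *ᵥ z = x := by
    rw [hz, mulVec_mulVec, Matrix.mul_nonsing_inv _ hMdet, one_mulVec]
  set p := H⁻¹ *ᵥ z with hp
  set q := K⁻¹ *ᵥ z with hq
  have hzp : H *ᵥ p = z := by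
    rw [hp, mulVec_mulVec, Matrix.mul_nonsing_inv _ (((Matrix.isUnit_iff_isUnit_det H).mp hH.isUnit)),
      one_mulVec]
  have hzq : K *ᵥ q = z := by
    rw [hq, mulVec_mulVec, Matrix.mul_nonsing_inv _ (((Matrix.isUnit_iff_isUnit_det K).mp hK.isUnit)),
      one_mulVec]
  have hxpq : x = (a:ℂ) • p + (b:ℂ) • q := by
    rw [← hxz, hM, add_mulVec, smul_mulVec, smul_mulVec, ← hp, ← hq]
  -- expansions of (star x ⬝ᵥ z).re
  have expand : ∀ w₁ w₂ : Fin n → ℂ,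
      (star ((a:ℂ) • w₁ + (b:ℂ) • w₂) ⬝ᵥ z).re
        = a * (star w₁ ⬝ᵥ z).re + b * (star w₂ ⬝ᵥ z).re := by
    intro w₁ w₂
    rw [star_add, star_smul, star_smul, add_dotProduct, smul_dotProduct, smul_dotProduct]
    simp [Complex.star_def, Complex.conj_ofReal, smul_eq_mul, Complex.add_re,
      Complex.re_ofReal_mul]
  have e1 : (star x ⬝ᵥ z).re = a * (star u ⬝ᵥ z).re + b * (star v ⬝ᵥ z).re := by
    rw [hx]; exact expand u v
  have e2 : (star x ⬝ᵥ z).re = a * (star p ⬝ᵥ z).re + b * (star q ⬝ᵥ z).re := by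
    rw [hxpq]; exact expand p q
  -- positivity terms
  have posH : 0 ≤ (star (u - p) ⬝ᵥ (H *ᵥ (u - p))).re := by
    have := hH.posSemidef.re_dotProduct_nonneg (u - p); simpa using this
  have posK : 0 ≤ (star (v - q) ⬝ᵥ (K *ᵥ (v - q))).re := by
    have := hK.posSemidef.re_dotProduct_nonneg (v - q); simpa using this
  have expandH : (star (u - p) ⬝ᵥ (H *ᵥ (u - p))).re
      = (star u ⬝ᵥ (H *ᵥ u)).re - 2 * (star u ⬝ᵥ z).re + (star p ⬝ᵥ z).re := by
    rw [star_sub, mulVec_sub, sub_dotProduct, dotProduct_sub, dotProduct_sub, hzp]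
    have hcross : (star p ⬝ᵥ (H *ᵥ u)).re = (star u ⬝ᵥ z).re := by
      rw [h2re H p u, hH.isHermitian.eq, hzp]
    simp only [Complex.sub_re]
    rw [hcross]
    ring
  have expandK : (star (v - q) ⬝ᵥ (K *ᵥ (v - q))).re
      = (star v ⬝ᵥ (K *ᵥ v)).re - 2 * (star v ⬝ᵥ z).re + (star q ⬝ᵥ z).re := by
    rw [star_sub, mulVec_sub, sub_dotProduct, dotProduct_sub, dotProduct_sub, hzq]
    have hcross : (star q ⬝ᵥ (K *ᵥ v)).re = (star v ⬝ᵥ z).re := by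
      rw [h2re K q v, hK.isHermitian.eq, hzq]
    simp only [Complex.sub_re]
    rw [hcross]
    ring
  rw [expandH] at posH
  rw [expandK] at posK
  nlinarith [mul_nonneg ha posH, mul_nonneg hb posK]

lemma reMat_csmul (r : ℝ) (A : Matrix (Fin n) (Fin n) ℂ) :
    reMat ((r:ℂ) • A) = (r:ℂ) • reMat A := by
  rw [← rsmul, reMat_rsmul, rsmul]

lemma LA {A B : Matrix (Fin n) (Fin n) ℂ} (hA : (reMat A).PosDef) (hB : (reMat B).PosDef)
    {a b : ℝ} (ha : 0 ≤ a) (hb : 0 ≤ b) (hab : a + b = 1) (x : Fin n → ℂ) :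
    (star x ⬝ᵥ ((((a:ℂ) • (reMat A)⁻¹ + (b:ℂ) • (reMat B)⁻¹)⁻¹) *ᵥ x)).re ≤
      (star x ⬝ᵥ (reMat (((a:ℂ) • A⁻¹ + (b:ℂ) • B⁻¹)⁻¹) *ᵥ x)).re := by
  set C := (a:ℂ) • A⁻¹ + (b:ℂ) • B⁻¹ with hC
  have hCre : reMat C = (a:ℂ) • reMat A⁻¹ + (b:ℂ) • reMat B⁻¹ := by
    rw [hC, reMat_add, reMat_csmul, reMat_csmul]
  have hCpd : (reMat C).PosDef := by
    rw [hCre]; exact convex_posDef (acc_reInv hA) (acc_reInv hB) ha hb hab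
  have hCdet : IsUnit C.det := acc_det hCpd
  set y := C⁻¹ *ᵥ x with hy
  have hxy : C *ᵥ y = x := by
    rw [hy, mulVec_mulVec, Matrix.mul_nonsing_inv _ hCdet, one_mulVec]
  set u := A⁻¹ *ᵥ y with hu
  set v := B⁻¹ *ᵥ y with hv
  have hyu : A *ᵥ u = y := by
    rw [hu, mulVec_mulVec, Matrix.mul_nonsing_inv _ (acc_det hA), one_mulVec]
  have hyv : B *ᵥ v = y := by
    rw [hv, mulVec_mulVec, Matrix.mul_nonsing_inv _ (acc_det hB), one_mulVec]
  have hx2 : x = (a:ℂ) • u + (b:ℂ) • v := by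
    rw [← hxy, hC, add_mulVec, smul_mulVec, smul_mulVec, ← hu, ← hv]
  -- RHS equals a * re(u* A u) + b * re(v* B v)
  have hRHS : (star x ⬝ᵥ (reMat C⁻¹ *ᵥ x)).re
      = a * (star u ⬝ᵥ (A *ᵥ u)).re + b * (star v ⬝ᵥ (B *ᵥ v)).re := by
    rw [dot_reMat, Complex.ofReal_re]
    rw [← hy]
    conv_lhs => rw [← hxy]
    rw [h1]
    rw [(h2re C y y).symm]
    have hexp : star y ⬝ᵥ (C *ᵥ y) =
        (a:ℂ) * (star y ⬝ᵥ (A⁻¹ *ᵥ y)) + (b:ℂ) * (star y ⬝ᵥ (B⁻¹ *ᵥ y)) := by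
      rw [hC, add_mulVec, smul_mulVec, smul_mulVec, dotProduct_add,
        dotProduct_smul, dotProduct_smul, smul_eq_mul, smul_eq_mul]
    rw [hexp]
    simp only [Complex.add_re, Complex.re_ofReal_mul]
    rw [inv_q (acc_det hA) y, inv_q (acc_det hB) y, ← hu, ← hv, hyu, hyv]
  rw [hRHS]
  -- LHS: apply L1W
  have hmain := L1W hA hB ha hb hab u v
  rw [← hx2] at hmain
  have hru : (star u ⬝ᵥ (reMat A *ᵥ u)).re = (star u ⬝ᵥ (A *ᵥ u)).re := by
    rw [dot_reMat, Complex.ofReal_re]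
  have hrv : (star v ⬝ᵥ (reMat B *ᵥ v)).re = (star v ⬝ᵥ (B *ᵥ v)).re := by
    rw [dot_reMat, Complex.ofReal_re]
  rw [hru, hrv] at hmain
  exact hmain

lemma scalar_key {a b R l : ℝ} (ha : 0 ≤ a) (hb : 0 ≤ b) (hab : a + b = 1)
    (hRa : a ≤ R) (hRb : b ≤ R) (hl : 0 < l) :
    0 ≤ (a + b * l⁻¹)⁻¹ + 2 * R * (1/2 * (1 + l) - (1/2 + 1/2 * l⁻¹)⁻¹) - (a + b * l) := by
  have ha' : a = 1 - b := by linarith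
  subst ha'
  have halb : 0 < (1 - b) * l + b := by
    rcases eq_or_lt_of_le hb with h | h
    · rw [← h]; nlinarith
    · nlinarith [mul_nonneg ha hl.le]
  have hd1 : 0 < (1 - b) + b * l⁻¹ := by
    have : (1 - b) + b * l⁻¹ = ((1 - b) * l + b) / l := by field_simp
    rw [this]; positivity
  have hd2 : 0 < 1/2 + 1/2 * l⁻¹ := by positivity
  have h1l : (0:ℝ) < 1 + l := by linarith
  have hinv1 : ((1 - b) + b * l⁻¹)⁻¹ = l / ((1 - b) * l + b) := by
    rw [eq_div_iff (by positivity)]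
    field_simp
  have hinv2 : (1/2 + 1/2 * l⁻¹)⁻¹ = 2 * l / (1 + l) := by
    rw [eq_div_iff (by positivity)]
    field_simp
    ring
  rw [hinv1, hinv2]
  have key : l / ((1 - b) * l + b) + 2 * R * (1/2 * (1 + l) - 2 * l / (1 + l)) - ((1 - b) + b * l)
      = ((1 - l)^2 * ((1 - b) * l * (R - b) + b * (R - (1 - b)))) / (((1 - b) * l + b) * (1 + l)) := by
    have h3 : (1 - b) * l + b ≠ 0 := halb.ne'
    have h4 : 1 + l ≠ 0 := h1l.ne'
    generalize hD : (1 - b) * l + b = D at h3 ⊢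
    field_simp
    rw [← hD]
    ring
  rw [key]
  have h2 : 0 ≤ (1 - b) * l * (R - b) + b * (R - (1 - b)) := by
    nlinarith [mul_nonneg (mul_nonneg ha hl.le) (by linarith : (0:ℝ) ≤ R - b),
      mul_nonneg hb (by linarith : (0:ℝ) ≤ R - (1 - b))]
  positivity

lemma posdef_conj {K G : Matrix (Fin n) (Fin n) ℂ} (hK : K.PosDef) (hG : G.IsHermitian)
    (hGdet : IsUnit G.det) : (G * K * G).PosDef := by
  have hherm : (G * K * G).IsHermitian := by
    rw [Matrix.IsHermitian, conjTranspose_mul, conjTranspose_mul, hG.eq, hK.isHermitian.eq,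
      Matrix.mul_assoc]
  refine .of_dotProduct_mulVec_pos hherm fun x hx => ?_
  have hGx : G *ᵥ x ≠ 0 := by
    intro h
    apply hx
    have : G⁻¹ *ᵥ (G *ᵥ x) = x := by
      rw [mulVec_mulVec, Matrix.nonsing_inv_mul _ hGdet, one_mulVec]
    rw [← this, h, mulVec_zero]
  have hq : star x ⬝ᵥ ((G * K * G) *ᵥ x) = star (G *ᵥ x) ⬝ᵥ (K *ᵥ (G *ᵥ x)) := by
    rw [h1 G x (K *ᵥ (G *ᵥ x)), hG.eq, ← mulVec_mulVec, ← mulVec_mulVec]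
  rw [hq]
  exact hK.dotProduct_mulVec_pos hGx

lemma sandwich (G X1 X2 X3 X4 : Matrix (Fin n) (Fin n) ℂ) (c : ℂ) :
    G * (X1 * G) + c • (G * (X3 * G) - G * (X2 * G)) - G * (X4 * G)
      = G * ((X1 + c • (X3 - X2) - X4) * G) := by
  simp only [Matrix.mul_add, Matrix.add_mul, Matrix.mul_sub, Matrix.sub_mul,
    Matrix.mul_smul, Matrix.smul_mul]

lemma LB {H K : Matrix (Fin n) (Fin n) ℂ} (hH : H.PosDef) (hK : K.PosDef)
    {a b R : ℝ} (ha : 0 ≤ a) (hb : 0 ≤ b) (hab : a + b = 1) (hRa : a ≤ R) (hRb : b ≤ R) :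
    (((a:ℂ) • H⁻¹ + (b:ℂ) • K⁻¹)⁻¹
      + ((2*R : ℝ):ℂ) • ((((1/2:ℝ)):ℂ) • (H + K) - (((1/2:ℝ):ℂ) • H⁻¹ + ((1/2:ℝ):ℂ) • K⁻¹)⁻¹)
      - ((a:ℂ) • H + (b:ℂ) • K)).PosSemidef := by
  classical
  obtain ⟨G, hGherm, hGG⟩ : ∃ G : Matrix (Fin n) (Fin n) ℂ, G.IsHermitian ∧ G * G = H :=
    open scoped MatrixOrder in
    ⟨CFC.sqrt H, (CFC.sqrt_nonneg H).posSemidef.isHermitian,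
      CFC.sqrt_mul_sqrt_self H hH.posSemidef.nonneg⟩
  have hGdet : IsUnit G.det := by
    have hd : G.det * G.det = H.det := by rw [← Matrix.det_mul, hGG]
    have hHdet : IsUnit H.det := (Matrix.isUnit_iff_isUnit_det H).mp hH.isUnit
    rw [isUnit_iff_ne_zero] at hHdet ⊢
    intro h
    apply hHdet
    rw [← hd, h, mul_zero]
  have hGinv_herm : (G⁻¹).IsHermitian := hGherm.inv
  have hGinv_det : IsUnit G⁻¹.det := Matrix.isUnit_nonsing_inv_det G hGdet
  have hGGinv : G * G⁻¹ = 1 := Matrix.mul_nonsing_inv G hGdet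
  have hGinvG : G⁻¹ * G = 1 := Matrix.nonsing_inv_mul G hGdet
  have hGinvinv : G⁻¹⁻¹ = G := Matrix.nonsing_inv_nonsing_inv G hGdet
  set Z := G⁻¹ * K * G⁻¹ with hZdef
  have hZpd : Z.PosDef := posdef_conj hK hGinv_herm hGinv_det
  have hKZ : K = G * Z * G := by
    rw [hZdef]
    calc K = (G * G⁻¹) * K * (G⁻¹ * G) := by
            rw [hGGinv, hGinvG, Matrix.one_mul, Matrix.mul_one]
    _ = G * (G⁻¹ * K * G⁻¹) * G := by simp only [Matrix.mul_assoc]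
  have hHinv : H⁻¹ = G⁻¹ * G⁻¹ := by rw [← hGG, Matrix.mul_inv_rev]
  have hKinv : K⁻¹ = G⁻¹ * Z⁻¹ * G⁻¹ := by
    rw [hKZ, Matrix.mul_inv_rev, Matrix.mul_inv_rev, Matrix.mul_assoc]
  clear_value Z
  clear hZdef
  -- spectral data for Z
  obtain ⟨U, ev, hU2, hU1, hspec, hev_pos⟩ :
      ∃ (U : Matrix (Fin n) (Fin n) ℂ) (ev : Fin n → ℝ),
        star U * U = 1 ∧ U * star U = 1 ∧
        Z = U * diagonal (fun i => ((ev i : ℝ) : ℂ)) * star U ∧ ∀ i, 0 < ev i := by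
    have hZh : Z.IsHermitian := hZpd.isHermitian
    refine ⟨(hZh.eigenvectorUnitary : Matrix (Fin n) (Fin n) ℂ), hZh.eigenvalues,
      (Unitary.mem_iff.mp hZh.eigenvectorUnitary.2).1,
      (Unitary.mem_iff.mp hZh.eigenvectorUnitary.2).2, ?_, fun i => hZpd.eigenvalues_pos i⟩
    have := hZh.spectral_theorem
    convert this using 2
    rw [Unitary.conjStarAlgAut_apply]
    rfl
  have hcancel : ∀ X : Matrix (Fin n) (Fin n) ℂ, star U * (U * X) = X := by
    intro X; rw [← Matrix.mul_assoc, hU2, Matrix.one_mul]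
  have hmul : ∀ d e : Fin n → ℂ, (U * diagonal d * star U) * (U * diagonal e * star U)
      = U * diagonal (fun i => d i * e i) * star U := by
    intro d e
    simp only [Matrix.mul_assoc]
    rw [hcancel (diagonal e * star U), ← Matrix.mul_assoc (diagonal d),
      diagonal_mul_diagonal]
  have hone : U * diagonal (fun _ : Fin n => (1:ℂ)) * star U = 1 := by
    have : diagonal (fun _ : Fin n => (1:ℂ)) = (1 : Matrix (Fin n) (Fin n) ℂ) :=
      diagonal_one
    rw [this, Matrix.mul_one, hU1]
  have hinv : ∀ d : Fin n → ℂ, (∀ i, d i ≠ 0) →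
      (U * diagonal d * star U)⁻¹ = U * diagonal (fun i => (d i)⁻¹) * star U := by
    intro d hd
    apply Matrix.inv_eq_right_inv
    rw [hmul]
    rw [show (fun i => d i * (d i)⁻¹) = fun _ => (1:ℂ) from funext fun i =>
      mul_inv_cancel₀ (hd i)]
    exact hone
  have hadd : ∀ d e : Fin n → ℂ, (U * diagonal d * star U) + (U * diagonal e * star U)
      = U * diagonal (fun i => d i + e i) * star U := by
    intro d e
    rw [← Matrix.add_mul, ← Matrix.mul_add, diagonal_add]
  have hsmul : ∀ (c : ℂ) (d : Fin n → ℂ), c • (U * diagonal d * star U)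
      = U * diagonal (fun i => c * d i) * star U := by
    intro c d
    rw [← Matrix.smul_mul, ← Matrix.mul_smul, ← diagonal_smul]
    rfl
  have hsub : ∀ d e : Fin n → ℂ, (U * diagonal d * star U) - (U * diagonal e * star U)
      = U * diagonal (fun i => d i - e i) * star U := by
    intro d e
    rw [← Matrix.sub_mul, ← Matrix.mul_sub, diagonal_sub]
  set evC : Fin n → ℂ := fun i => ((ev i : ℝ) : ℂ) with hevC
  have hevC_ne : ∀ i, evC i ≠ 0 := by
    intro i
    simp only [hevC, ne_eq, Complex.ofReal_eq_zero]
    exact (hev_pos i).ne'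
  have mZ : Z = U * diagonal evC * star U := hspec
  have mZinv : Z⁻¹ = U * diagonal (fun i => (evC i)⁻¹) * star U := by
    rw [mZ, hinv evC hevC_ne]
  set c2 : ℂ := ((1/2 : ℝ) : ℂ) with hc2
  set c : ℂ := ((2*R : ℝ) : ℂ) with hc
  set d1 : Fin n → ℂ := fun i => (a:ℂ) * 1 + (b:ℂ) * (evC i)⁻¹ with hd1
  set d2 : Fin n → ℂ := fun i => c2 * 1 + c2 * (evC i)⁻¹ with hd2
  set d3 : Fin n → ℂ := fun i => c2 * (1 + evC i) with hd3
  set d4 : Fin n → ℂ := fun i => (a:ℂ) * 1 + (b:ℂ) * evC i with hd4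
  have hd1_ne : ∀ i, d1 i ≠ 0 := by
    intro i
    have hval : d1 i = ((a + b * (ev i)⁻¹ : ℝ) : ℂ) := by
      simp only [hd1, hevC]; push_cast; ring
    rw [hval]
    simp only [ne_eq, Complex.ofReal_eq_zero]
    have hpos : 0 < a + b * (ev i)⁻¹ := by
      rcases eq_or_lt_of_le hb with h | h
      · have hb0 : b = 0 := h.symm
        have ha1 : a = 1 := by linarith
        rw [hb0, ha1]; norm_num
      · have := inv_pos.mpr (hev_pos i)
        nlinarith
    exact hpos.ne'
  have hd2_ne : ∀ i, d2 i ≠ 0 := by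
    intro i
    have hval : d2 i = ((1/2 + 1/2 * (ev i)⁻¹ : ℝ) : ℂ) := by
      simp only [hd2, hevC, hc2]; push_cast; ring
    rw [hval]
    simp only [ne_eq, Complex.ofReal_eq_zero]
    have := inv_pos.mpr (hev_pos i)
    positivity
  have m1 : (a:ℂ) • (1 : Matrix (Fin n) (Fin n) ℂ) + (b:ℂ) • Z⁻¹
      = U * diagonal d1 * star U := by
    rw [← hone, mZinv, hsmul, hsmul, hadd]
  have m2 : c2 • (1 : Matrix (Fin n) (Fin n) ℂ) + c2 • Z⁻¹
      = U * diagonal d2 * star U := by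
    rw [← hone, mZinv, hsmul, hsmul, hadd]
  have m3 : c2 • ((1 : Matrix (Fin n) (Fin n) ℂ) + Z) = U * diagonal d3 * star U := by
    rw [← hone, mZ, hadd, hsmul]
  have m4 : (a:ℂ) • (1 : Matrix (Fin n) (Fin n) ℂ) + (b:ℂ) • Z
      = U * diagonal d4 * star U := by
    rw [← hone, mZ, hsmul, hsmul, hadd]
  set dW : Fin n → ℂ := fun i => (d1 i)⁻¹ + c * (d3 i - (d2 i)⁻¹) - d4 i with hdW
  have mW : ((a:ℂ) • (1 : Matrix (Fin n) (Fin n) ℂ) + (b:ℂ) • Z⁻¹)⁻¹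
        + c • (c2 • ((1 : Matrix (Fin n) (Fin n) ℂ) + Z)
            - (c2 • (1 : Matrix (Fin n) (Fin n) ℂ) + c2 • Z⁻¹)⁻¹)
        - ((a:ℂ) • (1 : Matrix (Fin n) (Fin n) ℂ) + (b:ℂ) • Z)
      = U * diagonal dW * star U := by
    rw [m1, hinv d1 hd1_ne, m2, hinv d2 hd2_ne, m3, m4, hsub, hsmul, hadd, hsub]
  have E1 : (a:ℂ) • H⁻¹ + (b:ℂ) • K⁻¹
      = G⁻¹ * (((a:ℂ) • (1 : Matrix (Fin n) (Fin n) ℂ) + (b:ℂ) • Z⁻¹) * G⁻¹) := by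
    rw [hHinv, hKinv]
    simp only [Matrix.mul_add, Matrix.add_mul, Matrix.mul_smul, Matrix.smul_mul,
      Matrix.mul_one, Matrix.one_mul, Matrix.mul_assoc]
  have E1' : ((a:ℂ) • H⁻¹ + (b:ℂ) • K⁻¹)⁻¹
      = G * (((a:ℂ) • (1 : Matrix (Fin n) (Fin n) ℂ) + (b:ℂ) • Z⁻¹)⁻¹ * G) := by
    rw [E1, Matrix.mul_inv_rev, Matrix.mul_inv_rev, hGinvinv]
    simp only [Matrix.mul_assoc]
  have E2 : c2 • H⁻¹ + c2 • K⁻¹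
      = G⁻¹ * ((c2 • (1 : Matrix (Fin n) (Fin n) ℂ) + c2 • Z⁻¹) * G⁻¹) := by
    rw [hHinv, hKinv]
    simp only [Matrix.mul_add, Matrix.add_mul, Matrix.mul_smul, Matrix.smul_mul,
      Matrix.mul_one, Matrix.one_mul, Matrix.mul_assoc]
  have E2' : (c2 • H⁻¹ + c2 • K⁻¹)⁻¹
      = G * ((c2 • (1 : Matrix (Fin n) (Fin n) ℂ) + c2 • Z⁻¹)⁻¹ * G) := by
    rw [E2, Matrix.mul_inv_rev, Matrix.mul_inv_rev, hGinvinv]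
    simp only [Matrix.mul_assoc]
  have E3 : c2 • (H + K)
      = G * ((c2 • ((1 : Matrix (Fin n) (Fin n) ℂ) + Z)) * G) := by
    conv_lhs => rw [← hGG, hKZ]
    simp only [Matrix.mul_add, Matrix.add_mul, Matrix.mul_smul, Matrix.smul_mul,
      Matrix.mul_one, Matrix.one_mul, Matrix.mul_assoc]
  have E4 : (a:ℂ) • H + (b:ℂ) • K
      = G * (((a:ℂ) • (1 : Matrix (Fin n) (Fin n) ℂ) + (b:ℂ) • Z) * G) := by
    conv_lhs => rw [← hGG, hKZ]
    simp only [Matrix.mul_add, Matrix.add_mul, Matrix.mul_smul, Matrix.smul_mul,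
      Matrix.mul_one, Matrix.one_mul, Matrix.mul_assoc]
  have hT : ((a:ℂ) • H⁻¹ + (b:ℂ) • K⁻¹)⁻¹
        + c • (c2 • (H + K) - (c2 • H⁻¹ + c2 • K⁻¹)⁻¹)
        - ((a:ℂ) • H + (b:ℂ) • K)
      = G * ((U * diagonal dW * star U) * G) := by
    rw [E1', E2', E3, E4, sandwich, ← mW]
  have hdW_nonneg : ∀ i, 0 ≤ dW i := by
    intro i
    have hval : dW i = (((a + b * (ev i)⁻¹)⁻¹
        + 2 * R * (1/2 * (1 + ev i) - (1/2 + 1/2 * (ev i)⁻¹)⁻¹) - (a + b * ev i) : ℝ) : ℂ) := by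
      simp only [hdW, hd1, hd2, hd3, hd4, hevC, hc, hc2]
      push_cast
      ring
    rw [hval]
    rw [Complex.zero_le_real]
    exact scalar_key ha hb hab hRa hRb (hev_pos i)
  have hdiagPSD : (diagonal dW).PosSemidef := Matrix.posSemidef_diagonal_iff.mpr hdW_nonneg
  have hconjPSD : (U * diagonal dW * star U).PosSemidef := by
    have := hdiagPSD.mul_mul_conjTranspose_same U
    rwa [← Matrix.star_eq_conjTranspose] at this
  have hfinal : (G * ((U * diagonal dW * star U) * G)).PosSemidef := by
    have := hconjPSD.conjTranspose_mul_mul_same G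
    rwa [hGherm.eq, Matrix.mul_assoc] at this
  rw [hc2, hc] at hT
  rw [hT]
  exact hfinal


/-- For accretive `A, B`, `t ∈ [0,1]` and `R = max {t, 1-t}`, in the
Loewner order:
`ℜ((1-t)A + tB) ≤ ℜ(A !_t B) + 2R(ℜ((A+B)/2) - (ℜA) ! (ℜB))`. -/
theorem stmt6 (n : ℕ) (A B : Matrix (Fin n) (Fin n) ℂ)
    (hA : (reMat A).PosDef) (hB : (reMat B).PosDef)
    (t : ℝ) (ht : t ∈ Set.Icc (0 : ℝ) 1) (R : ℝ) (hR : R = max t (1 - t)) :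
    (reMat (harmMean A B t) +
        (2 * R) • (reMat ((1 / 2 : ℝ) • (A + B)) - harmMean (reMat A) (reMat B) (1 / 2)) -
      reMat ((1 - t) • A + t • B)).PosSemidef := by
  obtain ⟨ht0, ht1⟩ := ht
  have ha : 0 ≤ 1 - t := by linarith
  have hb : 0 ≤ t := ht0
  have hab : (1 - t) + t = 1 := by ring
  have hRa : 1 - t ≤ R := by rw [hR]; exact le_max_right _ _
  have hRb : t ≤ R := by rw [hR]; exact le_max_left _ _
  set H := reMat A with hH
  set K := reMat B with hK
  -- conversions to complex smul
  have e1 : harmMean A B t = (((1 - t : ℝ) : ℂ) • A⁻¹ + ((t : ℝ) : ℂ) • B⁻¹)⁻¹ := by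
    rw [harmMean, rsmul, rsmul]
  have e2 : harmMean H K (1/2)
      = (((1/2 : ℝ) : ℂ) • H⁻¹ + ((1/2 : ℝ) : ℂ) • K⁻¹)⁻¹ := by
    rw [harmMean, show (1 - 1/2 : ℝ) = (1/2 : ℝ) by norm_num, rsmul, rsmul]
  have e3 : reMat ((1/2 : ℝ) • (A + B)) = ((1/2 : ℝ) : ℂ) • (H + K) := by
    rw [reMat_rsmul, reMat_add, rsmul]
  have e4 : reMat ((1 - t) • A + t • B)
      = ((1 - t : ℝ) : ℂ) • H + ((t : ℝ) : ℂ) • K := by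
    rw [reMat_add, reMat_rsmul, reMat_rsmul, rsmul, rsmul]
  rw [e1, e2, e3, e4, rsmul (2 * R)]
  set N := ((((1 - t : ℝ)) : ℂ) • H⁻¹ + ((t : ℝ) : ℂ) • K⁻¹)⁻¹ with hN
  set W := (((2 * R : ℝ)) : ℂ) • (((1/2 : ℝ) : ℂ) • (H + K)
      - (((1/2 : ℝ) : ℂ) • H⁻¹ + ((1/2 : ℝ) : ℂ) • K⁻¹)⁻¹) with hW
  set Y := ((1 - t : ℝ) : ℂ) • H + ((t : ℝ) : ℂ) • K with hY
  set Ct := (((1 - t : ℝ) : ℂ) • A⁻¹ + ((t : ℝ) : ℂ) • B⁻¹)⁻¹ with hCt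
  have hsplit : reMat Ct + W - Y = (reMat Ct - N) + (N + W - Y) := by abel
  rw [hsplit]
  have hNpd : N.PosDef := (convex_posDef hA.inv hB.inv ha hb hab).inv
  have hDpsd : (reMat Ct - N).PosSemidef := by
    refine .of_dotProduct_mulVec_nonneg ((reMat_herm _).sub hNpd.isHermitian) fun x => ?_
    rw [sub_mulVec, dotProduct_sub]
    rw [herm_dot_real (reMat_herm Ct) x, herm_dot_real hNpd.isHermitian x,
      ← Complex.ofReal_sub, Complex.zero_le_real, sub_nonneg]
    exact LA hA hB ha hb hab x
  have hTpsd : (N + W - Y).PosSemidef := by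
    rw [hN, hW, hY]
    exact LB hA hB ha hb hab hRa hRb
  exact hDpsd.add hTpsd
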